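/- Let G be a 2-connected unit disk graph and F a 2-connected spanning subgraph of G with minimum total Euclidean edge length. If u is a vertex with degree at least 3 in F, then no two neighbors of u in F are adjacent to each other in F. -/

import Mathlib

open scoped Classical
open EuclideanGeometry Real

noncomputable section

/-- Points in the Euclidean plane. -/
abbrev Pt := EuclideanSpace ℝ (Fin 2)

/-- A graph is `k`-connected if it has more than `k` vertices and remains connected
after deleting any fewer than `k` vertices. -/
def KConnected {V : Type*} [Fintype V] (k : ℕ) (G : SimpleGraph V) : Prop :=
  k < Fintype.card V ∧ ∀ S : Finset V, S.card < k → (G.induce {v : V | v ∉ S}).Connected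

/-- `G` is a unit disk graph realized by the (injective) point placement `p`:
two distinct vertices are adjacent iff their Euclidean distance is at most 1. -/
def IsUnitDiskGraph {V : Type*} (G : SimpleGraph V) (p : V → Pt) : Prop :=
  Function.Injective p ∧ ∀ u v, G.Adj u v ↔ u ≠ v ∧ dist (p u) (p v) ≤ 1

/-- Euclidean length of an edge. -/
def edgeLen {V : Type*} (p : V → Pt) : Sym2 V → ℝ :=
  Sym2.lift ⟨fun a b => dist (p a) (p b), fun a b => dist_comm (p a) (p b)⟩

/-- Total Euclidean edge length of a graph. -/
def glen {V : Type*} [Fintype V] (p : V → Pt) (G : SimpleGraph V) : ℝ :=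
  ∑ e ∈ G.edgeFinset, edgeLen p e

/-- `F` is a minimum-length `k`-connected spanning subgraph (`k`-MSS) of `G`. -/
def IsMSS {V : Type*} [Fintype V] (k : ℕ) (p : V → Pt) (G F : SimpleGraph V) : Prop :=
  F ≤ G ∧ KConnected k F ∧
    ∀ F' : SimpleGraph V, F' ≤ G → KConnected k F' → glen p F ≤ glen p F'

section Aux

variable {V : Type*}

lemma reachable_induce_of_walk {H : SimpleGraph V} {T : Set V} {a b : V}
    (w : H.Walk a b) (hw : ∀ c ∈ w.support, c ∈ T) :
    (H.induce T).Reachable ⟨a, hw a w.start_mem_support⟩ ⟨b, hw b w.end_mem_support⟩ := by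
  induction w with
  | nil => exact SimpleGraph.Reachable.refl _
  | @cons x y z h p ih =>
    have hx : x ∈ T := hw x (by simp)
    have hy : y ∈ T := hw y (by simp)
    have hadj : (H.induce T).Adj ⟨x, hx⟩ ⟨y, hy⟩ := h
    exact hadj.reachable.trans (ih (fun c hc => hw c (by simp [hc])))

lemma walk_of_reachable_induce {H : SimpleGraph V} {T : Set V} {a b : T}
    (h : (H.induce T).Reachable a b) :
    ∃ w : H.Walk a.val b.val, ∀ c ∈ w.support, c ∈ T := by
  obtain ⟨w⟩ := h
  refine ⟨w.map (SimpleGraph.Embedding.induce T).toHom, ?_⟩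
  intro c hc
  have hc : c ∈ (w.map (SimpleGraph.Embedding.induce T).toHom).support := hc
  rw [SimpleGraph.Walk.support_map] at hc
  obtain ⟨c', _, rfl⟩ := List.mem_map.mp hc
  exact c'.property

lemma induce_connected_iff {H : SimpleGraph V} {T : Set V} :
    (H.induce T).Connected ↔ T.Nonempty ∧
      ∀ a ∈ T, ∀ b ∈ T, ∃ w : H.Walk a b, ∀ c ∈ w.support, c ∈ T := by
  constructor
  · intro h
    refine ⟨Set.nonempty_coe_sort.mp h.nonempty, fun a ha b hb => ?_⟩
    exact walk_of_reachable_induce (h.preconnected ⟨a, ha⟩ ⟨b, hb⟩)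
  · rintro ⟨⟨t, ht⟩, h⟩
    rw [SimpleGraph.connected_iff]
    refine ⟨fun a b => ?_, ⟨⟨t, ht⟩⟩⟩
    obtain ⟨w, hw⟩ := h a.val a.property b.val b.property
    exact reachable_induce_of_walk w hw

/-- replace occurrences of the edge `uv` in a walk by a given detour. -/
lemma walk_delete_of_walk {H : SimpleGraph V} {u v : V} {T : Set V}
    (hdet : u ∈ T → v ∈ T →
      ∃ d : (H.deleteEdges {s(u,v)}).Walk u v, ∀ c ∈ d.support, c ∈ T)
    {x y : V} (w : H.Walk x y) (hw : ∀ c ∈ w.support, c ∈ T) :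
    ∃ w' : (H.deleteEdges {s(u,v)}).Walk x y, ∀ c ∈ w'.support, c ∈ T := by
  induction w with
  | nil => exact ⟨SimpleGraph.Walk.nil, hw⟩
  | @cons a c z h p ih =>
    obtain ⟨p', hp'⟩ := ih (fun e he => hw e (by simp [he]))
    by_cases he : s(a, c) = s(u, v)
    · have haT : a ∈ T := hw a (by simp)
      have hcT : c ∈ T := hw c (by simp)
      rcases Sym2.eq_iff.mp he with ⟨rfl, rfl⟩ | ⟨rfl, rfl⟩
      · obtain ⟨d, hd⟩ := hdet haT hcT
        refine ⟨d.append p', fun e he' => ?_⟩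
        rcases (SimpleGraph.Walk.mem_support_append_iff _ _).mp he' with h1 | h1
        · exact hd e h1
        · exact hp' e h1
      · obtain ⟨d, hd⟩ := hdet hcT haT
        refine ⟨d.reverse.append p', fun e he' => ?_⟩
        rcases (SimpleGraph.Walk.mem_support_append_iff _ _).mp he' with h1 | h1
        · exact hd e (by simpa [SimpleGraph.Walk.support_reverse] using h1)
        · exact hp' e h1
    · refine ⟨SimpleGraph.Walk.cons (SimpleGraph.deleteEdges_adj.mpr ⟨h, fun hm => he hm⟩) p',
        fun e he' => ?_⟩
      rcases (by simpa using he' : e = a ∨ e ∈ p'.support) with rfl | h1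
      · exact hw e (by simp)
      · exact hp' e h1

lemma key_kconn {V : Type*} [Fintype V] {F : SimpleGraph V} (hF : KConnected 2 F)
    {u v u' : V} (hav : F.Adj u v) (hau' : F.Adj u u') (hvv' : F.Adj v u')
    (Hdet : ∃ d : (F.deleteEdges {s(u,v)}).Walk u v, ∀ c ∈ d.support, c ≠ u') :
    KConnected 2 (F.deleteEdges {s(u,v)}) := by
  refine ⟨hF.1, fun S hS => ?_⟩
  have hconn := hF.2 S hS
  rw [induce_connected_iff] at hconn ⊢
  refine ⟨hconn.1, fun a ha b hb => ?_⟩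
  obtain ⟨w, hw⟩ := hconn.2 a ha b hb
  refine walk_delete_of_walk (fun hu hv => ?_) w hw
  by_cases hu' : u' ∈ {v : V | v ∉ S}
  · have h1 : (F.deleteEdges {s(u,v)}).Adj u u' := by
      rw [SimpleGraph.deleteEdges_adj]
      refine ⟨hau', fun hm => ?_⟩
      rcases Sym2.eq_iff.mp hm with ⟨-, rfl⟩ | ⟨rfl, -⟩
      · exact hvv'.ne rfl
      · exact hav.ne rfl
    have h2 : (F.deleteEdges {s(u,v)}).Adj u' v := by
      rw [SimpleGraph.deleteEdges_adj]
      refine ⟨hvv'.symm, fun hm => ?_⟩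
      rcases Sym2.eq_iff.mp hm with ⟨rfl, -⟩ | ⟨rfl, -⟩
      · exact hau'.ne rfl
      · exact hvv'.ne rfl
    refine ⟨SimpleGraph.Walk.cons h1 (SimpleGraph.Walk.cons h2 SimpleGraph.Walk.nil),
      fun c hc => ?_⟩
    rcases (by simpa using hc : c = u ∨ c = u' ∨ c = v) with rfl | rfl | rfl
    · exact hu
    · exact hu'
    · exact hv
  · -- u' ∈ S and S.card ≤ 1, so S ⊆ {u'}
    obtain ⟨d, hd⟩ := Hdet
    refine ⟨d, fun c hc => ?_⟩
    intro hcS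
    have : c = u' := Finset.card_le_one.mp (Nat.lt_succ_iff.mp hS) c hcS u'
      (by simpa using hu')
    exact hd c hc this

lemma detour_exists {V : Type*} [Fintype V] {F : SimpleGraph V} (hF : KConnected 2 F)
    {u v u' w : V} (hav : F.Adj u v) (hau' : F.Adj u u') (haw : F.Adj u w)
    (hv'ne : v ≠ u') (hwv : w ≠ v) (hwu' : w ≠ u') :
    (∃ d : (F.deleteEdges {s(u,v)}).Walk u v, ∀ c ∈ d.support, c ≠ u') ∨
    (∃ d : (F.deleteEdges {s(u,u')}).Walk u u', ∀ c ∈ d.support, c ≠ v) := by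
  by_contra hc
  obtain ⟨h1, h2⟩ := not_or.mp hc
  set A : Set V := {a | ∃ d : (F.deleteEdges {s(u,v)}).Walk u a, ∀ c ∈ d.support, c ≠ u'}
    with hA
  have hvA : v ∉ A := h1
  -- a ∈ A gives a walk in F - uu' from u to a avoiding v and u'
  have A_to_A' : ∀ a ∈ A, ∃ d : (F.deleteEdges {s(u,u')}).Walk u a,
      ∀ c ∈ d.support, c ≠ v ∧ c ≠ u' := by
    rintro a ⟨d, hd⟩
    have hvd : v ∉ d.support := by
      intro hv
      exact hvA ⟨d.takeUntil v hv, fun c hc => hd c (d.support_takeUntil_subset hv hc)⟩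
    have hedges : ∀ e ∈ d.edges, e ∈ (F.deleteEdges {s(u,u')}).edgeSet := by
      intro e he
      have heF : e ∈ (F.deleteEdges {s(u,v)}).edgeSet := d.edges_subset_edgeSet he
      rw [SimpleGraph.edgeSet_deleteEdges] at heF ⊢
      refine ⟨heF.1, fun hm => ?_⟩
      rcases (hm : e = s(u,u')) with rfl
      exact hd u' (d.snd_mem_support_of_mem_edges he) rfl
    refine ⟨d.transfer _ hedges, fun c hc => ?_⟩
    rw [SimpleGraph.Walk.support_transfer] at hc
    exact ⟨fun h => hvd (h ▸ hc), hd c hc⟩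
  have no_edge_to_u' : ∀ a ∈ A, a ≠ u → ¬ F.Adj a u' := by
    intro a haA hau hadj
    obtain ⟨d, hd⟩ := A_to_A' a haA
    have hane : a ≠ u' := (hd a d.end_mem_support).2
    have hadj' : (F.deleteEdges {s(u,u')}).Adj a u' := by
      rw [SimpleGraph.deleteEdges_adj]
      refine ⟨hadj, fun hm => ?_⟩
      rcases Sym2.eq_iff.mp hm with ⟨rfl, -⟩ | ⟨rfl, rfl⟩
      · exact hau rfl
      · exact hane rfl
    refine h2 ⟨d.concat hadj', fun c hc => ?_⟩
    rw [SimpleGraph.Walk.support_concat] at hc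
    rcases List.mem_append.mp hc with h3 | h3
    · exact (hd c h3).1
    · rw [List.mem_singleton] at h3
      exact h3 ▸ hv'ne.symm
  have closure : ∀ a ∈ A, a ≠ u → ∀ b, F.Adj a b → b ∈ A := by
    rintro a ⟨d, hd⟩ hau b hadj
    by_cases hbu' : b = u'
    · exact absurd hadj (hbu' ▸ no_edge_to_u' a ⟨d, hd⟩ hau)
    · have hadj' : (F.deleteEdges {s(u,v)}).Adj a b := by
        rw [SimpleGraph.deleteEdges_adj]
        refine ⟨hadj, fun hm => ?_⟩
        rcases Sym2.eq_iff.mp hm with ⟨rfl, rfl⟩ | ⟨rfl, rfl⟩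
        · exact hau rfl
        · exact hvA ⟨d, hd⟩
      refine ⟨d.concat hadj', fun c hc => ?_⟩
      rw [SimpleGraph.Walk.support_concat] at hc
      rcases List.mem_append.mp hc with h3 | h3
      · exact hd c h3
      · rw [List.mem_singleton] at h3
        exact h3 ▸ hbu'
  -- w ∈ A
  have hwA : w ∈ A := by
    have hadj' : (F.deleteEdges {s(u,v)}).Adj u w := by
      rw [SimpleGraph.deleteEdges_adj]
      refine ⟨haw, fun hm => ?_⟩
      rcases Sym2.eq_iff.mp hm with ⟨-, rfl⟩ | ⟨rfl, -⟩
      · exact hwv rfl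
      · exact hav.ne rfl
    refine ⟨SimpleGraph.Walk.cons hadj' SimpleGraph.Walk.nil, fun c hc => ?_⟩
    rcases (by simpa using hc : c = u ∨ c = w) with rfl | rfl
    · exact hau'.ne
    · exact hwu'
  -- walk from w to v in F avoiding u
  have hconn := hF.2 {u} (by simp)
  rw [induce_connected_iff] at hconn
  obtain ⟨wk, hwk⟩ := hconn.2 w (by simpa using haw.ne') v (by simpa using hav.ne')
  have habs : ∀ {a b : V} (q : F.Walk a b), (∀ c ∈ q.support, c ≠ u) → a ∈ A → b ∈ A := by
    intro a b q
    induction q with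
    | nil => exact fun _ h => h
    | @cons x y z h p ih =>
      intro hq hx
      exact ih (fun c hc => hq c (by simp [hc]))
        (closure x hx (hq x (by simp)) y h)
  exact hvA (habs wk (fun c hc => by simpa using hwk c hc) hwA)


lemma glen_delete_lt {V : Type*} [Fintype V] (F : SimpleGraph V) (p : V → Pt)
    (hp : Function.Injective p) {u v : V} (h : F.Adj u v) :
    glen p (F.deleteEdges {s(u,v)}) < glen p F := by
  have hEF : (F.deleteEdges {s(u,v)}).edgeFinset = F.edgeFinset.erase s(u,v) := by
    ext e
    simp only [SimpleGraph.mem_edgeFinset, SimpleGraph.edgeSet_deleteEdges,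
      Finset.mem_erase, Set.mem_diff, Set.mem_singleton_iff]
    tauto
  have hmem : s(u,v) ∈ F.edgeFinset := by
    rw [SimpleGraph.mem_edgeFinset]; exact h
  have hpos : 0 < edgeLen p s(u,v) := by
    have : p u ≠ p v := fun he => h.ne (hp he)
    simpa [edgeLen] using dist_pos.mpr this
  have := Finset.add_sum_erase _ (edgeLen p) hmem
  unfold glen
  rw [← this]
  convert (show ∑ x ∈ F.edgeFinset.erase s(u,v), edgeLen p x <
    edgeLen p s(u,v) + ∑ x ∈ F.edgeFinset.erase s(u,v), edgeLen p x by linarith) using 2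
  convert hEF

end Aux

/-- In a minimum-length 2-connected spanning subgraph `F` of a 2-connected unit disk
graph, if a vertex `u` has degree at least 3 in `F`, then no two neighbors of `u`
in `F` are adjacent in `F`. -/
theorem mss2_neighbors_nonadjacent {V : Type*} [Fintype V] (G F : SimpleGraph V)
    (p : V → Pt) (hudg : IsUnitDiskGraph G p) (hG : KConnected 2 G)
    (hF : IsMSS 2 p G F) (u : V) (hdeg : 3 ≤ F.degree u) :
    ∀ v u' : V, F.Adj u v → F.Adj u u' → ¬ F.Adj v u' := by
  intro v u' hav hau' hvv'
  -- third neighbor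
  obtain ⟨w, hw⟩ : ∃ w, w ∈ F.neighborFinset u \ {v, u'} := by
    apply Finset.card_pos.mp
    have h1 : (F.neighborFinset u \ {v, u'}).card ≥ F.degree u - ({v, u'} : Finset V).card :=
      Finset.le_card_sdiff _ _
    have h2 : ({v, u'} : Finset V).card ≤ 2 := Finset.card_insert_le _ _ |>.trans (by simp)
    omega
  rw [Finset.mem_sdiff, SimpleGraph.mem_neighborFinset, Finset.mem_insert,
    Finset.mem_singleton, not_or] at hw
  obtain ⟨haw, hwv, hwu'⟩ := hw
  obtain ⟨hle, hkc, hmin⟩ := hF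
  rcases detour_exists hkc hav hau' haw hvv'.ne hwv hwu' with Hdet | Hdet
  · have hkc' := key_kconn hkc hav hau' hvv' Hdet
    have hlt := glen_delete_lt F p hudg.1 hav
    have := hmin _ ((SimpleGraph.deleteEdges_le _).trans hle) hkc'
    linarith
  · have hkc' := key_kconn hkc hau' hav hvv'.symm Hdet
    have hlt := glen_delete_lt F p hudg.1 hau'
    have := hmin _ ((SimpleGraph.deleteEdges_le _).trans hle) hkc'
    linarith
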